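/- There is no q-Steiner system S_2[2,3,7] on the F_2-vector space F_{2^7} that admits the Galois group Gal(F_{2^7}/F_2) as a group of automorphisms; that is, there is no set S of 3-dimensional F_2-subspaces of F_{2^7} such that every 2-dimensional subspace is contained in exactly one element of S and S is invariant under the Frobenius map x ↦ x^2. -/

import Mathlib

/-- The Frobenius map `x ↦ x ^ 2` on `GaloisField 2 7`, as a `ZMod 2`-linear map. -/
noncomputable def frobLin27 : GaloisField 2 7 →ₗ[ZMod 2] GaloisField 2 7 where
  toFun x := x ^ 2
  map_add' x y := add_pow_char x y 2
  map_smul' c x := by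
    simp only [RingHom.id_apply, smul_pow, ZMod.pow_card]

open Submodule Module

local notation "F" => GaloisField 2 7
local notation "K" => ZMod 2

@[simp] lemma frobLin27_apply (x : F) : frobLin27 x = x ^ 2 := rfl

noncomputable instance : Fintype F := Fintype.ofFinite _

noncomputable instance : DecidableEq F := Classical.decEq _

noncomputable instance (U : Submodule K F) : Fintype ↥U := Fintype.ofFinite _

attribute [local instance 0] Classical.propDecidable

instance : Finite (Submodule K F) := Finite.of_injective _ SetLike.coe_injective

noncomputable instance : Fintype (Submodule K F) := Fintype.ofFinite _

lemma F_card : Fintype.card F = 128 := by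
  have := GaloisField.card 2 7 (by norm_num)
  simpa [Nat.card_eq_fintype_card] using this

lemma F_pow_card (x : F) : x ^ 128 = x := by
  have := FiniteField.pow_card x
  rwa [F_card] at this

lemma two_eq_zero : (2 : F) = 0 := CharTwo.two_eq_zero

lemma sq_eq_self (x : F) (h : x ^ 2 = x) : x = 0 ∨ x = 1 := by
  have : x * (x - 1) = 0 := by linear_combination h
  rcases mul_eq_zero.1 this with h | h
  · exact Or.inl h
  · exact Or.inr (by linear_combination h)

lemma sq_inj {x y : F} (h : x ^ 2 = y ^ 2) : x = y := by
  have h0 : (x - y) ^ 2 = 0 := by linear_combination h + (y ^ 2 - x * y) * two_eq_zero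
  have := pow_eq_zero_iff (n := 2) (by norm_num) |>.1 h0
  linear_combination this

lemma pow4_eq_self (x : F) (h : x ^ 4 = x) : x = 0 ∨ x = 1 := by
  have h16 : x ^ 16 = x := by
    calc x ^ 16 = (x ^ 4) ^ 4 := by ring
    _ = x := by rw [h, h]
  have h64 : x ^ 64 = x := by
    calc x ^ 64 = (x ^ 16) ^ 4 := by ring
    _ = x := by rw [h16]; exact h
  apply sq_eq_self
  calc x ^ 2 = (x ^ 64) ^ 2 := by rw [h64]
  _ = x ^ 128 := by ring
  _ = x := F_pow_card x

lemma pow8_eq_self (x : F) (h : x ^ 8 = x) : x = 0 ∨ x = 1 := by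
  have h64 : x ^ 64 = x := by
    calc x ^ 64 = (x ^ 8) ^ 8 := by ring
    _ = x := by rw [h, h]
  apply sq_eq_self
  calc x ^ 2 = (x ^ 64) ^ 2 := by rw [h64]
  _ = x ^ 128 := by ring
  _ = x := F_pow_card x

/-- kernel of φ³+φ+1, i.e. x ↦ x⁸+x²+x -/
noncomputable def Kp : Submodule K F :=
  LinearMap.ker (frobLin27 ∘ₗ frobLin27 ∘ₗ frobLin27 + frobLin27 + LinearMap.id)

noncomputable def Kq : Submodule K F :=
  LinearMap.ker (frobLin27 ∘ₗ frobLin27 ∘ₗ frobLin27 + frobLin27 ∘ₗ frobLin27 + LinearMap.id)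

lemma mem_Kp {x : F} : x ∈ Kp ↔ x ^ 8 + x ^ 2 + x = 0 := by
  simp only [Kp, LinearMap.mem_ker, LinearMap.add_apply, LinearMap.comp_apply,
    frobLin27_apply, LinearMap.id_apply]
  constructor <;> intro h <;> linear_combination h

lemma mem_Kq {x : F} : x ∈ Kq ↔ x ^ 8 + x ^ 4 + x = 0 := by
  simp only [Kq, LinearMap.mem_ker, LinearMap.add_apply, LinearMap.comp_apply,
    frobLin27_apply, LinearMap.id_apply]
  constructor <;> intro h <;> linear_combination h

lemma one_not_mem_Kp : (1 : F) ∉ Kp := by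
  rw [mem_Kp]
  intro h
  have : (1 : F) = 0 := by linear_combination h - two_eq_zero
  exact one_ne_zero this

lemma one_not_mem_Kq : (1 : F) ∉ Kq := by
  rw [mem_Kq]
  intro h
  have : (1 : F) = 0 := by linear_combination h - two_eq_zero
  exact one_ne_zero this

lemma Kp_inf_Kq : Kp ⊓ Kq = ⊥ := by
  rw [eq_bot_iff]
  intro x hx
  have hp := mem_Kp.1 (hx.1 : x ∈ Kp)
  have hq := mem_Kq.1 (hx.2 : x ∈ Kq)
  rw [Submodule.mem_bot]
  have h42 : x ^ 4 = x ^ 2 := by linear_combination hq - hp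
  have h2 : x ^ 2 = x := sq_inj (by linear_combination h42)
  rcases sq_eq_self x h2 with h | h
  · exact h
  · subst h
    exact absurd (mem_Kp.2 hp) one_not_mem_Kp

lemma of01 {x : F} (h : x = 0 ∨ x = 1) : x = 0 ∨ x = 1 ∨ x ∈ Kp ∨ x ∈ Kq := h.imp id Or.inl

lemma cover {W : Submodule K F} (h3 : Module.finrank K W = 3)
    (hWinv : Submodule.map frobLin27 W ≤ W) {x : F} (hx : x ∈ W) :
    x = 0 ∨ x = 1 ∨ x ∈ Kp ∨ x ∈ Kq := by
  have h2 : x ^ 2 ∈ W := hWinv ⟨x, hx, rfl⟩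
  have h4 : x ^ 4 ∈ W := by
    have := hWinv ⟨x ^ 2, h2, rfl⟩
    simpa [show ((x ^ 2) ^ 2 : F) = x ^ 4 by ring] using this
  have h8 : x ^ 8 ∈ W := by
    have := hWinv ⟨x ^ 4, h4, rfl⟩
    simpa [show ((x ^ 4) ^ 2 : F) = x ^ 8 by ring] using this
  set v : Fin 4 → ↥W := ![⟨x, hx⟩, ⟨x ^ 2, h2⟩, ⟨x ^ 4, h4⟩, ⟨x ^ 8, h8⟩] with hv
  have hnli : ¬ LinearIndependent K v := by
    intro h
    have := h.fintype_card_le_finrank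
    rw [h3] at this
    simp at this
  rw [Fintype.not_linearIndependent_iff] at hnli
  obtain ⟨g, hsum, i, hi⟩ := hnli
  have hF : g 0 • x + g 1 • x ^ 2 + g 2 • x ^ 4 + g 3 • x ^ 8 = 0 := by
    have := congrArg Subtype.val hsum
    simpa [hv, Fin.sum_univ_four] using this
  have hK : ∀ c : K, c = 0 ∨ c = 1 := by decide
  rcases hK (g 0) with e0 | e0 <;> rcases hK (g 1) with e1 | e1 <;>
    rcases hK (g 2) with e2 | e2 <;> rcases hK (g 3) with e3 | e3 <;>
    rw [e0, e1, e2, e3] at hF <;>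
    simp only [zero_smul, one_smul, add_zero, zero_add] at hF
  -- (0,0,0,0)
  · exfalso; fin_cases i <;> simp [e0, e1, e2, e3] at hi
  -- (0,0,0,1) : x^8 = 0
  · exact Or.inl (by have := pow_eq_zero_iff (n := 8) (by norm_num) |>.1 hF; exact this)
  -- (0,0,1,0) : x^4 = 0
  · exact Or.inl (pow_eq_zero_iff (n := 4) (by norm_num) |>.1 hF)
  -- (0,0,1,1) : x^4 + x^8 = 0
  · have h84 : (x ^ 4) ^ 2 = (x ^ 2) ^ 2 := by linear_combination hF - x ^ 4 * two_eq_zero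
    have h42 : (x ^ 2) ^ 2 = x ^ 2 := by
      have := sq_inj h84
      linear_combination this
    rcases sq_eq_self _ h42 with h | h
    · exact Or.inl (pow_eq_zero_iff (n := 2) (by norm_num) |>.1 h)
    · exact of01 (Or.inr (sq_inj (show x ^ 2 = 1 ^ 2 by linear_combination h)))
  -- (0,1,0,0) : x^2 = 0
  · exact Or.inl (pow_eq_zero_iff (n := 2) (by norm_num) |>.1 hF)
  -- (0,1,0,1) : x^2 + x^8 = 0
  · have : (x ^ 4) ^ 2 = x ^ 2 := by linear_combination hF - x ^ 2 * two_eq_zero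
    have h4x : x ^ 4 = x := sq_inj (by linear_combination this)
    exact of01 (pow4_eq_self x h4x)
  -- (0,1,1,0) : x^2 + x^4 = 0
  · have : (x ^ 2) ^ 2 = x ^ 2 := by linear_combination hF - x ^ 2 * two_eq_zero
    exact of01 (sq_eq_self x (sq_inj (show (x ^ 2) ^ 2 = x ^ 2 from this)))
  -- (0,1,1,1) : x^2 + x^4 + x^8 = 0
  · have hu : x + x ^ 2 + x ^ 4 = 0 := by
      have : (x + x ^ 2 + x ^ 4) ^ 2 = 0 ^ 2 := by
        linear_combination hF + (x ^ 3 + x ^ 5 + x ^ 6) * two_eq_zero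
      exact sq_inj this
    have h8x : x ^ 8 = x := by linear_combination hF - hu
    exact of01 (pow8_eq_self x h8x)
  -- (1,0,0,0)
  · exact Or.inl hF
  -- (1,0,0,1) : x + x^8 = 0
  · have h8x : x ^ 8 = x := by linear_combination hF - x * two_eq_zero
    exact of01 (pow8_eq_self x h8x)
  -- (1,0,1,0) : x + x^4 = 0
  · have h4x : x ^ 4 = x := by linear_combination hF - x * two_eq_zero
    exact of01 (pow4_eq_self x h4x)
  -- (1,0,1,1) : x + x^4 + x^8 = 0 : Kq
  · exact Or.inr (Or.inr (Or.inr (mem_Kq.2 (by linear_combination hF))))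
  -- (1,1,0,0) : x + x^2 = 0
  · have : x ^ 2 = x := by linear_combination hF - x * two_eq_zero
    exact of01 (sq_eq_self x this)
  -- (1,1,0,1) : x + x^2 + x^8 = 0 : Kp
  · exact Or.inr (Or.inr (Or.inl (mem_Kp.2 (by linear_combination hF))))
  -- (1,1,1,0) : x + x^2 + x^4 = 0
  · have hsq : x ^ 2 + x ^ 4 + x ^ 8 = 0 := by
      linear_combination (x + x ^ 2 + x ^ 4) * hF - (x ^ 3 + x ^ 5 + x ^ 6) * two_eq_zero
    have h8x : x ^ 8 = x := by linear_combination hsq - hF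
    exact of01 (pow8_eq_self x h8x)
  -- (1,1,1,1)
  · have hu4 : (x + x ^ 2) ^ 4 = x + x ^ 2 := by
      linear_combination hF + (2 * x ^ 5 + 3 * x ^ 6 + 2 * x ^ 7 - x - x ^ 2) * two_eq_zero
    rcases pow4_eq_self _ hu4 with h | h
    · have : x ^ 2 = x := by linear_combination h - x * two_eq_zero
      exact of01 (sq_eq_self x this)
    · have hx2 : x ^ 2 = x + 1 := by linear_combination h - x * two_eq_zero
      have h1 : x ^ 4 = (x + 1) ^ 2 := by rw [← hx2]; ring
      have h4x : x ^ 4 = x := by linear_combination h1 + hx2 + (x + 1) * two_eq_zero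
      exact of01 (pow4_eq_self x h4x)

lemma card_submodule (U : Submodule K F) : Nat.card ↥U = 2 ^ Module.finrank K U := by
  have h : Fintype.card ↥U = Fintype.card (ZMod 2) ^ Module.finrank (ZMod 2) ↥U :=
    card_eq_pow_finrank
  rw [Nat.card_eq_fintype_card, h, ZMod.card]

lemma ncard_submodule (U : Submodule K F) : (U : Set F).ncard = 2 ^ Module.finrank K U := by
  rw [← Nat.card_coe_set_eq]
  exact card_submodule U

open Polynomial in
lemma finrank_le_of_roots (U : Submodule K F) (p : F[X]) (hdeg : p.natDegree = 8)
    (hne : p ≠ 0) (hroot : ∀ x ∈ U, p.IsRoot x) : Module.finrank K U ≤ 3 := by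
  have hsub : (U : Set F) ⊆ ↑p.roots.toFinset := by
    intro x hx
    simp only [Finset.mem_coe, Multiset.mem_toFinset, Polynomial.mem_roots']
    exact ⟨hne, hroot x hx⟩
  have hcard : Nat.card ↥U ≤ 8 := by
    calc Nat.card ↥U = (U : Set F).ncard := Nat.card_coe_set_eq _
    _ ≤ (↑p.roots.toFinset : Set F).ncard := Set.ncard_le_ncard hsub (Set.toFinite _)
    _ = p.roots.toFinset.card := Set.ncard_coe_finset _
    _ ≤ Multiset.card p.roots := Multiset.toFinset_card_le _
    _ ≤ p.natDegree := p.card_roots'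
    _ = 8 := hdeg
  rw [card_submodule] at hcard
  exact (Nat.pow_le_pow_iff_right (by norm_num)).1 (hcard.trans_eq (by norm_num : (8:ℕ) = 2 ^ 3))

open Polynomial in
lemma finrank_Kp_le : Module.finrank K Kp ≤ 3 := by
  apply finrank_le_of_roots Kp (X ^ 8 + X ^ 2 + X)
  · compute_degree!
  · intro h
    have : (X ^ 8 + X ^ 2 + X : F[X]).natDegree = 8 := by compute_degree!
    rw [h] at this
    simp at this
  · intro x hx
    have := mem_Kp.1 hx
    simp only [IsRoot, eval_add, eval_pow, eval_X]
    linear_combination this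

open Polynomial in
lemma finrank_Kq_le : Module.finrank K Kq ≤ 3 := by
  apply finrank_le_of_roots Kq (X ^ 8 + X ^ 4 + X)
  · compute_degree!
  · intro h
    have : (X ^ 8 + X ^ 4 + X : F[X]).natDegree = 8 := by compute_degree!
    rw [h] at this
    simp at this
  · intro x hx
    have := mem_Kq.1 hx
    simp only [IsRoot, eval_add, eval_pow, eval_X]
    linear_combination this

lemma classify {W : Submodule K F} (h3 : Module.finrank K W = 3)
    (hfix : Submodule.map frobLin27 W = W) : W = Kp ∨ W = Kq := by
  have hinv : Submodule.map frobLin27 W ≤ W := le_of_eq hfix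
  set A := Kp ⊓ W with hA
  set B := Kq ⊓ W with hB
  have hAW : A ≤ W := inf_le_right
  have hBW : B ≤ W := inf_le_right
  have hABbot : A ⊓ B = ⊥ := by
    rw [eq_bot_iff, ← Kp_inf_Kq]
    intro x hx
    exact ⟨hx.1.1, hx.2.1⟩
  have hrank : Module.finrank K A + Module.finrank K B ≤ 3 := by
    have heq := Submodule.finrank_sup_add_finrank_inf_eq A B
    rw [hABbot, finrank_bot, add_zero] at heq
    rw [← heq, ← h3]
    exact Submodule.finrank_mono (sup_le hAW hBW)
  -- cardinalities
  have cardsub := ncard_submodule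
  have hsub : (W : Set F) ⊆ (A : Set F) ∪ (B : Set F) ∪ {1} := by
    intro x hx
    rcases cover h3 hinv hx with h | h | h | h
    · exact Or.inl (Or.inl (by simp [h, A.zero_mem]))
    · exact Or.inr (by simp [h])
    · exact Or.inl (Or.inl ⟨h, hx⟩)
    · exact Or.inl (Or.inr ⟨h, hx⟩)
  have hcard : (8:ℕ) ≤ 2 ^ Module.finrank K A + 2 ^ Module.finrank K B + 1 := by
    have h8 : (W : Set F).ncard = 8 := by rw [cardsub, h3]; norm_num
    calc (8:ℕ) = (W : Set F).ncard := h8.symm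
    _ ≤ ((A : Set F) ∪ (B : Set F) ∪ {1}).ncard := Set.ncard_le_ncard hsub (Set.toFinite _)
    _ ≤ ((A : Set F) ∪ (B : Set F)).ncard + ({1} : Set F).ncard := Set.ncard_union_le _ _
    _ ≤ (A : Set F).ncard + (B : Set F).ncard + ({1} : Set F).ncard :=
        Nat.add_le_add_right (Set.ncard_union_le _ _) _
    _ = 2 ^ Module.finrank K A + 2 ^ Module.finrank K B + 1 := by
        rw [cardsub, cardsub, Set.ncard_singleton]
  have key : Module.finrank K A = 3 ∨ Module.finrank K B = 3 := by
    set a := Module.finrank K A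
    set b := Module.finrank K B
    have ha : a ≤ 3 := le_trans (Nat.le_add_right _ _) hrank
    have hb : b ≤ 3 := le_trans (Nat.le_add_left _ _) hrank
    interval_cases a <;> interval_cases b <;> revert hcard hrank <;> norm_num
  rcases key with h | h
  · left
    have hAW' : A = W := Submodule.eq_of_le_of_finrank_eq hAW (by rw [h, h3])
    have hWKp : W ≤ Kp := hAW' ▸ inf_le_left
    exact Submodule.eq_of_le_of_finrank_le hWKp (by rw [h3]; exact finrank_Kp_le)
  · right
    have hBW' : B = W := Submodule.eq_of_le_of_finrank_eq hBW (by rw [h, h3])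
    have hWKq : W ≤ Kq := hBW' ▸ inf_le_left
    exact Submodule.eq_of_le_of_finrank_le hWKq (by rw [h3]; exact finrank_Kq_le)

lemma span_pair_finrank {a b : F} (ha : a ≠ 0) (hb : b ≠ 0) (hab : a ≠ b) :
    Module.finrank K (Submodule.span K ({a, b} : Set F)) = 2 := by
  have hli : LinearIndependent K ![a, b] := by
    rw [LinearIndependent.pair_iff]
    intro s t hst
    have hK : ∀ c : K, c = 0 ∨ c = 1 := by decide
    rcases hK s with hs | hs <;> rcases hK t with ht | ht <;> subst hs <;> subst ht <;>
      simp only [zero_smul, one_smul, add_zero, zero_add] at hst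
    · exact ⟨rfl, rfl⟩
    · exact absurd hst hb
    · exact absurd hst ha
    · exact absurd (show a = b by linear_combination hst - b * two_eq_zero) hab
  have h := finrank_span_eq_card hli
  rw [show Set.range ![a, b] = ({a, b} : Set F) by
    ext x; simp [Matrix.range_cons, Matrix.range_empty, or_comm]] at h
  simpa using h

open Finset in
lemma lines_count (U : Submodule K F) :
    3 * (Finset.univ.filter
        (fun T : Submodule K F => Module.finrank K T = 2 ∧ T ≤ U)).card
      = (Nat.card ↥U - 1).choose 2 := by
  classical
  set N : Finset F := (U : Set F).toFinset.erase 0 with hN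
  have hmem_N : ∀ {x : F}, x ∈ N ↔ x ∈ U ∧ x ≠ 0 := by
    intro x
    rw [hN, Finset.mem_erase, Set.mem_toFinset, SetLike.mem_coe]
    tauto
  have hNcard : N.card = Nat.card ↥U - 1 := by
    rw [hN, Finset.card_erase_of_mem (by rw [Set.mem_toFinset]; exact U.zero_mem),
      Set.toFinset_card, ← Nat.card_eq_fintype_card]
    rfl
  set P : Finset (Finset F) := N.powersetCard 2 with hP
  set L := Finset.univ.filter
    (fun T : Submodule K F => Module.finrank K T = 2 ∧ T ≤ U) with hL
  have hPmem : ∀ {s : Finset F}, s ∈ P ↔ s ⊆ N ∧ s.card = 2 := by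
    intro s; rw [hP, Finset.mem_powersetCard]
  have hspan : ∀ s ∈ P, Submodule.span K (s : Set F) ∈ L := by
    intro s hs
    obtain ⟨hsN, hcard⟩ := hPmem.1 hs
    obtain ⟨a, b, hab, rfl⟩ := Finset.card_eq_two.1 hcard
    have haN := hmem_N.1 (hsN (Finset.mem_insert_self a {b}))
    have hbN := hmem_N.1 (hsN (Finset.mem_insert_of_mem (Finset.mem_singleton_self b)))
    rw [hL, Finset.mem_filter]
    refine ⟨Finset.mem_univ _, ?_, ?_⟩
    · rw [show ((↑({a, b} : Finset F) : Set F)) = ({a, b} : Set F) by simp]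
      exact span_pair_finrank haN.2 hbN.2 hab
    · rw [Submodule.span_le]
      intro x hx
      simp only [Finset.coe_insert, Finset.coe_singleton, Set.mem_insert_iff,
        Set.mem_singleton_iff] at hx
      rcases hx with rfl | rfl
      · exact haN.1
      · exact hbN.1
  have hfiber : ∀ T ∈ L, (P.filter fun s : Finset F => Submodule.span K (↑s : Set F) = T).card = 3 := by
    intro T hT
    rw [hL, Finset.mem_filter] at hT
    obtain ⟨-, hT2, hTU⟩ := hT
    set M : Finset F := (T : Set F).toFinset.erase 0 with hM
    have hmem_M : ∀ {x : F}, x ∈ M ↔ x ∈ T ∧ x ≠ 0 := by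
      intro x
      rw [hM, Finset.mem_erase, Set.mem_toFinset, SetLike.mem_coe]
      tauto
    have hMcard : M.card = 3 := by
      rw [hM, Finset.card_erase_of_mem (by rw [Set.mem_toFinset]; exact T.zero_mem),
        Set.toFinset_card, ← Nat.card_eq_fintype_card]
      have : Nat.card ↥T = 4 := by rw [card_submodule, hT2]; norm_num
      rw [show Nat.card ↥(T : Set F) = Nat.card ↥T from rfl, this]
    have : (P.filter fun s : Finset F => Submodule.span K (↑s : Set F) = T) = M.powersetCard 2 := by
      ext s
      simp only [Finset.mem_filter, Finset.mem_powersetCard, hPmem]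
      constructor
      · rintro ⟨⟨hsN, hcard⟩, hspan⟩
        refine ⟨?_, hcard⟩
        intro x hx
        rw [hmem_M]
        exact ⟨hspan ▸ Submodule.subset_span hx, (hmem_N.1 (hsN hx)).2⟩
      · rintro ⟨hsM, hcard⟩
        have hsT : ∀ x ∈ s, x ∈ T := fun x hx => (hmem_M.1 (hsM hx)).1
        refine ⟨⟨fun x hx => hmem_N.2 ⟨hTU (hsT x hx), (hmem_M.1 (hsM hx)).2⟩, hcard⟩, ?_⟩
        obtain ⟨a, b, hab, rfl⟩ := Finset.card_eq_two.1 hcard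
        have haM := hmem_M.1 (hsM (Finset.mem_insert_self a {b}))
        have hbM := hmem_M.1 (hsM (Finset.mem_insert_of_mem (Finset.mem_singleton_self b)))
        have hle : Submodule.span K ((↑({a, b} : Finset F)) : Set F) ≤ T := by
          rw [Submodule.span_le]
          intro x hx
          simp only [Finset.coe_insert, Finset.coe_singleton, Set.mem_insert_iff,
            Set.mem_singleton_iff] at hx
          rcases hx with rfl | rfl
          · exact haM.1
          · exact hbM.1
        refine Submodule.eq_of_le_of_finrank_eq hle ?_
        rw [hT2, show ((↑({a, b} : Finset F)) : Set F) = ({a, b} : Set F) by simp]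
        exact span_pair_finrank haM.2 hbM.2 hab
    rw [this, Finset.card_powersetCard, hMcard]; norm_num [Nat.choose]
  have hPcard : P.card = (Nat.card ↥U - 1).choose 2 := by
    rw [hP, Finset.card_powersetCard, hNcard]
  rw [← hPcard, Finset.card_eq_sum_card_fiberwise hspan, Finset.sum_congr rfl hfiber,
    Finset.sum_const, smul_eq_mul, mul_comm]

/-- There is no q-Steiner system S₂[2,3,7] on the `ZMod 2`-vector space
`GaloisField 2 7` that is invariant under the Frobenius map `x ↦ x ^ 2`, i.e. admitting
the Galois group `Gal(F_{2^7}/F_2)` as a group of automorphisms. -/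
theorem no_frobenius_invariant_q_steiner_2_3_7 :
    ¬ ∃ S : Set (Submodule (ZMod 2) (GaloisField 2 7)),
      (∀ W ∈ S, Module.finrank (ZMod 2) W = 3) ∧
      (∀ T : Submodule (ZMod 2) (GaloisField 2 7), Module.finrank (ZMod 2) T = 2 →
        ∃! W, W ∈ S ∧ T ≤ W) ∧
      (∀ W ∈ S, Submodule.map frobLin27 W ∈ S) := by
  rintro ⟨S, h3, hcover, hinvS⟩
  classical
  -- the finset of members of S
  set Sfin : Finset (Submodule K F) := Finset.univ.filter (· ∈ S) with hSfin
  have hmemSfin : ∀ {W : Submodule K F}, W ∈ Sfin ↔ W ∈ S := by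
    intro W; rw [hSfin, Finset.mem_filter]; simp
  -- each W ∈ S contains exactly 7 lines
  have hlinesW : ∀ W ∈ S, (Finset.univ.filter
      (fun T : Submodule K F => Module.finrank K T = 2 ∧ T ≤ W)).card = 7 := by
    intro W hW
    have h := lines_count W
    rw [card_submodule, h3 W hW] at h
    have e : ((2:ℕ) ^ 3 - 1).choose 2 = 21 := by rw [Nat.choose_two_right]; norm_num
    rw [e] at h
    omega
  -- total number of lines is 2667
  have hlinesTop : (Finset.univ.filter
      (fun T : Submodule K F => Module.finrank K T = 2 ∧ T ≤ (⊤ : Submodule K F))).card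
      = 2667 := by
    have h := lines_count (⊤ : Submodule K F)
    rw [card_submodule] at h
    rw [finrank_top K F, GaloisField.finrank 2 (by norm_num)] at h
    have e : ((2:ℕ) ^ 7 - 1).choose 2 = 8001 := by rw [Nat.choose_two_right]; norm_num
    rw [e] at h
    omega
  -- the unique block through each line
  set chosen : Submodule K F → Submodule K F := fun T =>
    if h : Module.finrank K T = 2 then (hcover T h).choose else ⊥ with hchosen
  have hchosen_spec : ∀ T : Submodule K F, (h : Module.finrank K T = 2) →
      chosen T ∈ S ∧ T ≤ chosen T := by
    intro T h
    rw [hchosen]; simp only [dif_pos h]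
    exact (hcover T h).choose_spec.1
  have hchosen_eq : ∀ T W : Submodule K F, Module.finrank K T = 2 → W ∈ S → T ≤ W →
      chosen T = W := by
    intro T W h hW hTW
    rw [hchosen]; simp only [dif_pos h]
    exact ((hcover T h).choose_spec.2 W ⟨hW, hTW⟩).symm
  -- double counting: 2667 = 7 * |S|
  have hmaps : ∀ T ∈ (Finset.univ.filter
      (fun T : Submodule K F => Module.finrank K T = 2 ∧ T ≤ (⊤ : Submodule K F))),
      chosen T ∈ Sfin := by
    intro T hT
    rw [Finset.mem_filter] at hT
    exact hmemSfin.2 (hchosen_spec T hT.2.1).1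
  have hdouble := Finset.card_eq_sum_card_fiberwise hmaps
  have hfib : ∀ W ∈ Sfin, ((Finset.univ.filter
      (fun T : Submodule K F => Module.finrank K T = 2 ∧ T ≤ (⊤ : Submodule K F))).filter
      (fun T => chosen T = W)).card = 7 := by
    intro W hW
    have hWS := hmemSfin.1 hW
    have : ((Finset.univ.filter
        (fun T : Submodule K F => Module.finrank K T = 2 ∧ T ≤ (⊤ : Submodule K F))).filter
        (fun T => chosen T = W)) = Finset.univ.filter
        (fun T : Submodule K F => Module.finrank K T = 2 ∧ T ≤ W) := by
      ext T
      simp only [Finset.mem_filter, Finset.mem_univ, true_and, le_top, and_true]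
      constructor
      · rintro ⟨h2, rfl⟩
        exact ⟨h2, (hchosen_spec T h2).2⟩
      · rintro ⟨h2, hTW⟩
        exact ⟨h2, hchosen_eq T W h2 hWS hTW⟩
    rw [this]
    exact hlinesW W hWS
  rw [hlinesTop, Finset.sum_congr rfl hfib, Finset.sum_const, smul_eq_mul] at hdouble
  have hS381 : Sfin.card = 381 := by omega
  -- the Frobenius permutation of S
  set m : Submodule K F → Submodule K F := fun V => Submodule.map frobLin27 V with hm
  have hm7 : ∀ V : Submodule K F, m (m (m (m (m (m (m V)))))) = V := by
    intro V
    rw [hm]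
    simp only [← Submodule.map_comp]
    have hid : (frobLin27 ∘ₗ (frobLin27 ∘ₗ (frobLin27 ∘ₗ (frobLin27 ∘ₗ
        (frobLin27 ∘ₗ (frobLin27 ∘ₗ frobLin27)))))) = LinearMap.id := by
      apply LinearMap.ext
      intro x
      simp only [LinearMap.comp_apply, frobLin27_apply, LinearMap.id_apply, ← pow_mul]
      norm_num
      exact F_pow_card x
    rw [hid, Submodule.map_id]
  let β := {W : Submodule K F // W ∈ S}
  have hcardβ : Nat.card β = 381 := by
    rw [Nat.card_eq_fintype_card, Fintype.card_subtype]
    convert hS381 using 2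
  let σ : Equiv.Perm β := {
    toFun := fun W => ⟨m W.1, hinvS W.1 W.2⟩
    invFun := fun W => ⟨m (m (m (m (m (m W.1))))),
      hinvS _ (hinvS _ (hinvS _ (hinvS _ (hinvS _ (hinvS _ W.2)))))⟩
    left_inv := fun W => Subtype.ext (hm7 W.1)
    right_inv := fun W => Subtype.ext (hm7 W.1) }
  have hσ7 : σ ^ 7 = 1 := by
    apply Equiv.ext
    intro W
    have h : (σ ^ 7) W = σ (σ (σ (σ (σ (σ (σ W)))))) := by
      simp [pow_succ, Equiv.Perm.mul_apply]
    rw [h]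
    show σ (σ (σ (σ (σ (σ (σ W)))))) = W
    exact Subtype.ext (hm7 W.1)
  -- the cyclic group generated by σ is a 7-group
  have hG : IsPGroup 7 (Subgroup.zpowers σ) := by
    intro g
    refine ⟨1, ?_⟩
    obtain ⟨k, hk⟩ := Subgroup.mem_zpowers_iff.1 g.2
    have h7 : (g : Equiv.Perm β) ^ 7 = 1 := by
      rw [← hk, ← zpow_natCast, ← zpow_mul, mul_comm, zpow_mul, zpow_natCast, hσ7, one_zpow]
    apply Subtype.ext
    push_cast
    simpa using h7
  haveI : Fact (Nat.Prime 7) := ⟨by norm_num⟩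
  have hmod := hG.card_modEq_card_fixedPoints β
  -- fixed points are Kp or Kq
  have hfixKpKq : ∀ b : MulAction.fixedPoints (Subgroup.zpowers σ) β,
      (b.1.1 : Submodule K F) = Kp ∨ (b.1.1 : Submodule K F) = Kq := by
    intro b
    have hb := b.2 ⟨σ, Subgroup.mem_zpowers σ⟩
    have hσb : σ b.1 = b.1 := hb
    have hmb : m b.1.1 = b.1.1 := congrArg Subtype.val hσb
    exact classify (h3 b.1.1 b.1.2) hmb
  have hfixcard : Nat.card (MulAction.fixedPoints (Subgroup.zpowers σ) β) ≤ 2 := by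
    have h2 : Nat.card Prop = 2 := by
      simp
    rw [← h2]
    apply Nat.card_le_card_of_injective
      (f := fun b : MulAction.fixedPoints (Subgroup.zpowers σ) β =>
        ((b.1.1 : Submodule K F) = Kp))
    intro b c hbc
    rcases hfixKpKq b with hb | hb
    · have hcKp : (c.1.1 : Submodule K F) = Kp := Eq.mp hbc hb
      exact Subtype.ext (Subtype.ext (hb.trans hcKp.symm))
    · rcases hfixKpKq c with hc | hc
      · have hbKp : (b.1.1 : Submodule K F) = Kp := Eq.mpr hbc hc
        exact Subtype.ext (Subtype.ext (hbKp.trans hc.symm))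
      · exact Subtype.ext (Subtype.ext (hb.trans hc.symm))
  rw [hcardβ] at hmod
  have h1 : 381 % 7 = Nat.card (MulAction.fixedPoints (Subgroup.zpowers σ) β) % 7 := hmod
  omega
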